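/- For every n ≥ 5, the lower central series and the derived series of the braid group B_n both stabilize at the commutator subgroup: for every k ≥ 1, lowerCentralSeries B_n k = commutator B_n and derivedSeries B_n k = commutator B_n. In particular the commutator subgroup [B_n, B_n] is a perfect group for n ≥ 5. -/

import Mathlib

/-- The braid relations on `n` strands, as elements of the free group on `Fin (n-1)`. -/
def braidRels (n : ℕ) : Set (FreeGroup (Fin (n - 1))) :=
  {r | ∃ i j : Fin (n - 1), 2 ≤ |(i : ℤ) - (j : ℤ)| ∧
      r = FreeGroup.of i * FreeGroup.of j * (FreeGroup.of j * FreeGroup.of i)⁻¹} ∪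
  {r | ∃ i j : Fin (n - 1), |(i : ℤ) - (j : ℤ)| = 1 ∧
      r = FreeGroup.of i * FreeGroup.of j * FreeGroup.of i *
        (FreeGroup.of j * FreeGroup.of i * FreeGroup.of j)⁻¹}

/-- The braid group on `n` strands. -/
abbrev B (n : ℕ) : Type := PresentedGroup (braidRels n)

/-- The standard generators of the braid group. -/
def σ {n : ℕ} (i : Fin (n - 1)) : B n := PresentedGroup.of i

/-- From a braid relation and commutation, deduce equality. -/
lemma eq_of_braid_of_comm {G : Type*} [Group G] {x y : G}
    (h : x * y * x = y * x * y) (hc : x * y = y * x) : x = y := by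
  rw [hc] at h
  exact mul_left_cancel h

/-- The key quadruple lemma: in a group whose commutator subgroup is abelian,
four elements satisfying the braid-type relations must all be equal. -/
lemma quad {G : Type*} [Group G]
    (hD : ∀ x y : G, x ∈ commutator G → y ∈ commutator G → x * y = y * x)
    (a b c d : G) (hab : a * b * a = b * a * b) (hbc : b * c * b = c * b * c)
    (hcd : c * d * c = d * c * d) (hac : a * c = c * a) (had : a * d = d * a)
    (hbd : b * d = d * b) : a = b ∧ a = c ∧ a = d := by
  have memC : ∀ x : G, Abelianization.of x = 1 → x ∈ commutator G := fun x h =>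
    (QuotientGroup.eq_one_iff x).mp h
  have habel : ∀ x y : G, x * y * x = y * x * y →
      Abelianization.of x = Abelianization.of y := by
    intro x y h
    have h2 := congrArg Abelianization.of h
    simp only [map_mul] at h2
    exact eq_of_braid_of_comm h2 (mul_comm _ _)
  have eab := habel a b hab
  have ebc := habel b c hbc
  have ecd := habel c d hcd
  have hk2 : a⁻¹ * b ∈ commutator G := by
    refine memC _ ?_
    rw [map_mul, map_inv, eab, inv_mul_cancel]
  have hk4 : a⁻¹ * d ∈ commutator G := by
    refine memC _ ?_
    rw [map_mul, map_inv, eab, ebc, ecd, inv_mul_cancel]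
  obtain ⟨k2, hk2m, rfl⟩ : ∃ k, k ∈ commutator G ∧ b = a * k :=
    ⟨a⁻¹ * b, hk2, by group⟩
  obtain ⟨k4, hk4m, rfl⟩ : ∃ k, k ∈ commutator G ∧ d = a * k :=
    ⟨a⁻¹ * d, hk4, by group⟩
  have hc24 : k2 * k4 = k4 * k2 := hD _ _ hk2m hk4m
  have haK4 : a * k4 = k4 * a := by
    have h := had
    rw [mul_assoc a k4 a] at h
    exact mul_left_cancel h
  have key : a * (k2 * a) * k4 = a * (a * k2) * k4 :=
    calc a * (k2 * a) * k4 = a * k2 * (a * k4) := by group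
      _ = a * k4 * (a * k2) := hbd
      _ = a * (k4 * a) * k2 := by group
      _ = a * (a * k4) * k2 := by rw [haK4]
      _ = a * a * (k4 * k2) := by group
      _ = a * a * (k2 * k4) := by rw [hc24]
      _ = a * (a * k2) * k4 := by group
  have haK2 : a * k2 = k2 * a := (mul_left_cancel (mul_right_cancel key)).symm
  have hcab : a * (a * k2) = a * k2 * a := by rw [mul_assoc, haK2]
  have h1 : a = a * k2 := eq_of_braid_of_comm hab hcab
  have h2 : a = c := by
    have hbc' := hbc
    rw [← h1] at hbc'
    exact eq_of_braid_of_comm hbc' hac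
  have h3 : a = a * k4 := by
    have hcd' := hcd
    rw [← h2] at hcd'
    have hcad : a * (a * k4) = a * k4 * a := by rw [mul_assoc, haK4]
    exact eq_of_braid_of_comm hcd' hcad
  exact ⟨h1, h2, h3⟩

/-- For `n ≥ 5`, the lower central series and derived series of `B n` both
stabilize at the commutator subgroup from the first step onward. -/
theorem lowerCentralSeries_derivedSeries_braid_stabilize (n : ℕ) (hn : 5 ≤ n) :
    ∀ k : ℕ, 1 ≤ k →
      (⊤ : Subgroup (B n)).lowerCentralSeries k = commutator (B n) ∧
      derivedSeries (B n) k = commutator (B n) := by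
  -- relations in B n
  have rel_comm : ∀ i j : Fin (n - 1), 2 ≤ |(i : ℤ) - (j : ℤ)| → σ i * σ j = σ j * σ i := by
    intro i j h
    have h1 : PresentedGroup.mk (braidRels n)
        (FreeGroup.of i * FreeGroup.of j * (FreeGroup.of j * FreeGroup.of i)⁻¹) = 1 :=
      (QuotientGroup.eq_one_iff _).mpr
        (Subgroup.subset_normalClosure (Or.inl ⟨i, j, h, rfl⟩))
    simp only [map_mul, map_inv] at h1
    exact mul_inv_eq_one.mp h1
  have rel_braid : ∀ i j : Fin (n - 1), |(i : ℤ) - (j : ℤ)| = 1 →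
      σ i * σ j * σ i = σ j * σ i * σ j := by
    intro i j h
    have h1 : PresentedGroup.mk (braidRels n)
        (FreeGroup.of i * FreeGroup.of j * FreeGroup.of i *
          (FreeGroup.of j * FreeGroup.of i * FreeGroup.of j)⁻¹) = 1 :=
      (QuotientGroup.eq_one_iff _).mpr
        (Subgroup.subset_normalClosure (Or.inr ⟨i, j, h, rfl⟩))
    simp only [map_mul, map_inv] at h1
    exact mul_inv_eq_one.mp h1
  -- the quotient by the second derived subgroup
  have : (derivedSeries (B n) 2).Normal := derivedSeries_normal _ _
  let π : B n →* B n ⧸ derivedSeries (B n) 2 := QuotientGroup.mk' _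
  have hπsurj : Function.Surjective π := QuotientGroup.mk'_surjective _
  have hD2Q : derivedSeries (B n ⧸ derivedSeries (B n) 2) 2 = ⊥ := by
    rw [← map_derivedSeries_eq hπsurj 2]
    rw [Subgroup.map_eq_bot_iff]
    rw [QuotientGroup.ker_mk']
  have hDcomm : ∀ x y : B n ⧸ derivedSeries (B n) 2,
      x ∈ commutator _ → y ∈ commutator _ → x * y = y * x := by
    intro x y hx hy
    open scoped commutatorElement in
    have hmem : ⁅x, y⁆ ∈ derivedSeries (B n ⧸ derivedSeries (B n) 2) 2 :=
      Subgroup.commutator_mem_commutator hx hy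
    rw [hD2Q, Subgroup.mem_bot] at hmem
    exact commutatorElement_eq_one_iff_mul_comm.mp hmem
  -- generators in the quotient
  set g : Fin (n - 1) → B n ⧸ derivedSeries (B n) 2 := fun i => π (σ i) with hg
  have hQcomm : ∀ i j : Fin (n - 1), 2 ≤ |(i : ℤ) - (j : ℤ)| → g i * g j = g j * g i := by
    intro i j h
    simp only [hg, ← map_mul]
    rw [rel_comm i j h]
  have hQbraid : ∀ i j : Fin (n - 1), |(i : ℤ) - (j : ℤ)| = 1 →
      g i * g j * g i = g j * g i * g j := by
    intro i j h
    simp only [hg, ← map_mul]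
    rw [rel_braid i j h]
  have hfin : ∀ (m : ℕ) (h : m < n - 1), ((⟨m, h⟩ : Fin (n - 1)) : ℤ) = (m : ℤ) := by
    intro m h; rfl
  -- the quadruple result
  have quadres : ∀ j : ℕ, j + 3 < n - 1 →
      ∀ (h0 : j < n - 1) (h1 : j + 1 < n - 1) (h2 : j + 2 < n - 1) (h3 : j + 3 < n - 1),
      g ⟨j, h0⟩ = g ⟨j + 1, h1⟩ ∧ g ⟨j, h0⟩ = g ⟨j + 2, h2⟩ ∧ g ⟨j, h0⟩ = g ⟨j + 3, h3⟩ := by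
    intro j hj h0 h1 h2 h3
    have e1 : |((⟨j, h0⟩ : Fin (n - 1)) : ℤ) - ((⟨j + 1, h1⟩ : Fin (n - 1)) : ℤ)| = 1 := by
      rw [hfin j h0, hfin (j+1) h1]; push_cast; rw [show (j : ℤ) - (j + 1) = -1 by ring]; norm_num
    have e2 : |((⟨j + 1, h1⟩ : Fin (n - 1)) : ℤ) - ((⟨j + 2, h2⟩ : Fin (n - 1)) : ℤ)| = 1 := by
      rw [hfin (j+1) h1, hfin (j+2) h2]; push_cast; rw [show (j : ℤ) + 1 - (j + 2) = -1 by ring]; norm_num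
    have e3 : |((⟨j + 2, h2⟩ : Fin (n - 1)) : ℤ) - ((⟨j + 3, h3⟩ : Fin (n - 1)) : ℤ)| = 1 := by
      rw [hfin (j+2) h2, hfin (j+3) h3]; push_cast; rw [show (j : ℤ) + 2 - (j + 3) = -1 by ring]; norm_num
    have c1 : 2 ≤ |((⟨j, h0⟩ : Fin (n - 1)) : ℤ) - ((⟨j + 2, h2⟩ : Fin (n - 1)) : ℤ)| := by
      rw [hfin j h0, hfin (j+2) h2]; push_cast; rw [show (j : ℤ) - (j + 2) = -2 by ring]; norm_num
    have c2 : 2 ≤ |((⟨j, h0⟩ : Fin (n - 1)) : ℤ) - ((⟨j + 3, h3⟩ : Fin (n - 1)) : ℤ)| := by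
      rw [hfin j h0, hfin (j+3) h3]; push_cast; rw [show (j : ℤ) - (j + 3) = -3 by ring]; norm_num
    have c3 : 2 ≤ |((⟨j + 1, h1⟩ : Fin (n - 1)) : ℤ) - ((⟨j + 3, h3⟩ : Fin (n - 1)) : ℤ)| := by
      rw [hfin (j+1) h1, hfin (j+3) h3]; push_cast; rw [show (j : ℤ) + 1 - (j + 3) = -2 by ring]; norm_num
    exact quad hDcomm _ _ _ _ (hQbraid _ _ e1) (hQbraid _ _ e2) (hQbraid _ _ e3)
      (hQcomm _ _ c1) (hQcomm _ _ c2) (hQcomm _ _ c3)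
  have h0lt : 0 < n - 1 := by omega
  -- all generators are equal in the quotient
  have geq : ∀ (m : ℕ) (h : m < n - 1), g ⟨m, h⟩ = g ⟨0, h0lt⟩ := by
    intro m
    induction m with
    | zero => intro h; rfl
    | succ m ih =>
      intro h
      have hm : m < n - 1 := by omega
      obtain ⟨j, hjm, hm1, hj3⟩ : ∃ j, j ≤ m ∧ m + 1 ≤ j + 3 ∧ j + 3 < n - 1 :=
        ⟨min m (n - 5), by omega, by omega, by omega⟩
      have hq := quadres j hj3 (by omega) (by omega) (by omega) (by omega)
      have hstep : g ⟨m + 1, h⟩ = g ⟨m, hm⟩ := by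
        rcases (by omega : m = j ∨ m = j + 1 ∨ m = j + 2) with hmj | hmj | hmj
        · subst hmj
          exact hq.1.symm
        · subst hmj
          exact hq.2.1.symm.trans hq.1
        · subst hmj
          exact hq.2.2.symm.trans hq.2.1
      exact hstep.trans (ih hm)
  -- the quotient is abelian
  have hQab : ∀ x y : B n ⧸ derivedSeries (B n) 2, x * y = y * x := by
    have hzp : ∀ x : B n, π x ∈ Subgroup.zpowers (g ⟨0, h0lt⟩) := by
      intro x
      have := PresentedGroup.generated_by (braidRels n)
        ((Subgroup.zpowers (g ⟨0, h0lt⟩)).comap π)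
        (fun i => by
          rw [Subgroup.mem_comap]
          show g ⟨(i : ℕ), i.isLt⟩ ∈ Subgroup.zpowers (g ⟨0, h0lt⟩)
          rw [geq (i : ℕ) i.isLt]
          exact Subgroup.mem_zpowers _) x
      rwa [Subgroup.mem_comap] at this
    intro x y
    obtain ⟨x', rfl⟩ := hπsurj x
    obtain ⟨y', rfl⟩ := hπsurj y
    obtain ⟨k, hk⟩ := hzp x'
    obtain ⟨l, hl⟩ := hzp y'
    rw [← hk, ← hl, ← zpow_add, ← zpow_add, add_comm]
  -- commutator ≤ second derived subgroup
  have hCle : commutator (B n) ≤ derivedSeries (B n) 2 := by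
    rw [commutator_def, Subgroup.commutator_le]
    intro x _ y _
    open scoped commutatorElement in
    have hone : π ⁅x, y⁆ = 1 := by
      rw [map_commutatorElement]
      exact commutatorElement_eq_one_iff_mul_comm.mpr (hQab _ _)
    exact (QuotientGroup.eq_one_iff _).mp hone
  have hD2C : derivedSeries (B n) 2 = ⁅commutator (B n), commutator (B n)⁆ := by
    rw [derivedSeries_succ, derivedSeries_one]
  have hCC : ⁅commutator (B n), commutator (B n)⁆ = commutator (B n) :=
    le_antisymm (by rw [commutator_def]; exact Subgroup.commutator_mono le_top le_top)
      (hD2C ▸ hCle)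
  have hCtop : ⁅commutator (B n), (⊤ : Subgroup (B n))⁆ = commutator (B n) :=
    le_antisymm (Subgroup.commutator_le_left _ _)
      (le_trans (hCC.ge) (Subgroup.commutator_mono le_rfl le_top))
  intro k hk
  induction k with
  | zero => omega
  | succ m ih =>
    rcases Nat.eq_zero_or_pos m with rfl | hm
    · exact ⟨Subgroup.top_lowerCentralSeries_one, derivedSeries_one (B n)⟩
    · obtain ⟨ihl, ihd⟩ := ih hm
      constructor
      · rw [Subgroup.lowerCentralSeries_succ, ihl]
        exact hCtop
      · rw [derivedSeries_succ, ihd]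
        exact hCC
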